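/- Let G be a finite simple graph on a vertex set V with |V| = n, let ε ∈ (0,1) and let t ≥ 1 be an integer, and suppose ε^{2t} n ≥ 16, so that p := (ε^{2t} n / 16)^{−ε} satisfies 0 < p ≤ 1. Let 𝒞 be the family of connected components of G having at most 1/ε vertices and let scc(G) = |𝒞|. Define Y(ω) = Σ_{C ∈ 𝒞} p^{−|C|} · Π_{v ∈ C} ω(v) for ω : V → {0,1}. Then, with respect to the product probability measure μ_p, the probability that |Y − scc(G)| ≥ ε^t n is at most 1/16. -/

import Mathlib

open Finset MeasureTheory

/-- The Bernoulli measure on `Bool` with success probability `p`. -/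
noncomputable def bernoulliMeasure (p : ℝ) : Measure Bool :=
  (ENNReal.ofReal p) • Measure.dirac true + (ENNReal.ofReal (1 - p)) • Measure.dirac false

/-- The product measure `μ_p` on `V → Bool`: each coordinate is independently `true`
with probability `p`. -/
noncomputable def muP (V : Type*) [Fintype V] (p : ℝ) : Measure (V → Bool) :=
  Measure.pi fun _ => bernoulliMeasure p


lemma bernoulli_prob {p : ℝ} (h0 : 0 ≤ p) (h1 : p ≤ 1) :
    IsProbabilityMeasure (bernoulliMeasure p) := by
  constructor
  simp only [bernoulliMeasure, Measure.add_apply, Measure.smul_apply, smul_eq_mul,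
    Measure.dirac_apply' _ MeasurableSet.univ, Set.indicator_univ, Pi.one_apply, mul_one]
  rw [← ENNReal.ofReal_add h0 (by linarith)]
  norm_num

lemma integral_bernoulli {p : ℝ} (h0 : 0 ≤ p) (h1 : p ≤ 1) (f : Bool → ℝ) :
    ∫ b, f b ∂(bernoulliMeasure p) = p * f true + (1 - p) * f false := by
  haveI := bernoulli_prob h0 h1
  haveI h1' : IsFiniteMeasure ((ENNReal.ofReal p) • Measure.dirac (true : Bool)) := by
    constructor
    simp [Measure.smul_apply]
  haveI h2' : IsFiniteMeasure ((ENNReal.ofReal (1 - p)) • Measure.dirac (false : Bool)) := by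
    constructor
    simp [Measure.smul_apply]
  rw [bernoulliMeasure, integral_add_measure (Integrable.of_finite) (Integrable.of_finite)]
  simp [integral_smul_measure, ENNReal.toReal_ofReal h0,
    ENNReal.toReal_ofReal (by linarith : (0:ℝ) ≤ 1 - p)]

lemma muP_prob {V : Type*} [Fintype V] {p : ℝ} (h0 : 0 ≤ p) (h1 : p ≤ 1) :
    IsProbabilityMeasure (muP V p) := by
  haveI := bernoulli_prob h0 h1
  exact MeasureTheory.Measure.pi.instIsProbabilityMeasure _

lemma integral_prod_ind {V : Type*} [Fintype V] [DecidableEq V] {p : ℝ}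
    (h0 : 0 ≤ p) (h1 : p ≤ 1) (S : Finset V) :
    ∫ ω, (∏ v ∈ S, (if ω v then (1 : ℝ) else 0)) ∂(muP V p) = p ^ S.card := by
  haveI := bernoulli_prob h0 h1
  letI : MeasureSpace Bool := ⟨bernoulliMeasure p⟩
  have hvol : muP V p = (volume : Measure (V → Bool)) := rfl
  have key : ∀ ω : V → Bool, (∏ v ∈ S, (if ω v then (1 : ℝ) else 0))
      = ∏ v : V, (if v ∈ S then (if ω v then (1:ℝ) else 0) else 1) := by
    intro ω
    rw [Finset.prod_ite_mem, Finset.univ_inter]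
  rw [hvol]
  calc ∫ ω : V → Bool, (∏ v ∈ S, (if ω v then (1 : ℝ) else 0))
      = ∫ ω : V → Bool, ∏ v : V, (if v ∈ S then (if ω v then (1:ℝ) else 0) else 1) := by
        simp_rw [key]
    _ = ∏ v : V, ∫ b : Bool, (if v ∈ S then (if b then (1:ℝ) else 0) else 1) := by
        exact integral_fintype_prod_eq_prod (fun v (b : Bool) => if v ∈ S then (if b then (1:ℝ) else 0) else 1)
    _ = ∏ v : V, (if v ∈ S then p else 1) := by
        haveI : IsProbabilityMeasure (volume : Measure Bool) := bernoulli_prob h0 h1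
        refine Finset.prod_congr rfl fun v _ => ?_
        by_cases h : v ∈ S <;>
          simp [h, show (volume : Measure Bool) = bernoulliMeasure p from rfl,
            integral_bernoulli h0 h1]
    _ = p ^ S.card := by
        rw [Finset.prod_ite_mem, Finset.univ_inter, Finset.prod_const]

/-- Let `𝒞` be the family of connected components of `G` of size at most `1/ε`, and
`scc(G) = |𝒞|`. With `p = (ε^{2t} n / 16)^{-ε}` (where `ε^{2t} n ≥ 16`), the estimator
`Y ω = ∑_{C ∈ 𝒞} p^{-|C|} ∏_{v ∈ C} ω v` satisfies
`μ_p (|Y - scc(G)| ≥ ε^t n) ≤ 1/16`. -/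
theorem estimator_concentration {V : Type*} [Fintype V] [DecidableEq V]
    (G : SimpleGraph V) (n : ℕ) (hn : n = Fintype.card V)
    (ε : ℝ) (hε0 : 0 < ε) (hε1 : ε < 1) (t : ℕ) (ht : 1 ≤ t)
    (h16 : 16 ≤ ε ^ (2 * t) * n)
    (p : ℝ) (hp : p = (ε ^ (2 * t) * n / 16) ^ (-ε))
    (𝒞 : Finset (Finset V))
    (h𝒞 : ∀ C : Finset V, C ∈ 𝒞 ↔
      ((∃ c : G.ConnectedComponent, (C : Set V) = c.supp) ∧ (C.card : ℝ) ≤ 1 / ε)) :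
    (muP V p {ω : V → Bool |
        ε ^ t * n ≤ |(∑ C ∈ 𝒞, (p ^ C.card)⁻¹ * ∏ v ∈ C, (if ω v then (1 : ℝ) else 0))
          - (𝒞.card : ℝ)|}).toReal ≤ 1 / 16 := by
  -- basic positivity facts
  have hεt : (0:ℝ) < ε ^ (2 * t) := pow_pos hε0 _
  have hn0 : (0:ℝ) < n := by nlinarith
  set x : ℝ := ε ^ (2 * t) * n / 16 with hxdef
  have hx1 : (1:ℝ) ≤ x := by rw [hxdef]; linarith
  have hx0 : (0:ℝ) < x := by linarith
  have hp0 : 0 < p := by rw [hp]; exact Real.rpow_pos_of_pos hx0 _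
  have hp1 : p ≤ 1 := by
    rw [hp]; exact Real.rpow_le_one_of_one_le_of_nonpos hx1 (by linarith)
  have hpinv : p⁻¹ = x ^ ε := by rw [hp, Real.rpow_neg hx0.le, inv_inv]
  haveI : IsProbabilityMeasure (muP V p) := muP_prob hp0.le hp1
  set Y : (V → Bool) → ℝ :=
    fun ω => ∑ C ∈ 𝒞, (p ^ C.card)⁻¹ * ∏ v ∈ C, (if ω v then (1 : ℝ) else 0) with hYdef
  have hY2 : MeasureTheory.MemLp Y 2 (muP V p) :=
    ⟨(StronglyMeasurable.of_discrete).aestronglyMeasurable, eLpNorm_lt_top_of_finite⟩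
  have hint : ∀ f : (V → Bool) → ℝ, Integrable f (muP V p) := fun f => .of_finite
  have hI : ∀ S : Finset V,
      ∫ ω, (∏ v ∈ S, (if ω v then (1 : ℝ) else 0)) ∂(muP V p) = p ^ S.card :=
    integral_prod_ind hp0.le hp1
  -- expectation of Y
  have hEY : ∫ ω, Y ω ∂(muP V p) = (𝒞.card : ℝ) := by
    rw [hYdef, integral_finset_sum 𝒞 (fun C _ => hint _)]
    simp_rw [integral_const_mul, hI]
    simp [inv_mul_cancel₀ (pow_ne_zero _ hp0.ne')]
  -- products of indicators
  have hprodU : ∀ (C D : Finset V) (ω : V → Bool),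
      (∏ v ∈ C, (if ω v then (1 : ℝ) else 0)) * (∏ v ∈ D, (if ω v then (1 : ℝ) else 0))
        = ∏ v ∈ C ∪ D, (if ω v then (1 : ℝ) else 0) := by
    intro C D ω
    rw [Finset.prod_boole, Finset.prod_boole, Finset.prod_boole]
    simp only [Finset.mem_union, or_imp, forall_and]
    by_cases hC : ∀ v ∈ C, ω v = true
    · by_cases hD : ∀ v ∈ D, ω v = true
      · rw [if_pos hC, if_pos hD, if_pos ⟨hC, hD⟩, mul_one]
      · rw [if_neg hD, mul_zero, if_neg (fun h => hD h.2)]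
    · rw [if_neg hC, zero_mul, if_neg (fun h => hC h.1)]
  -- second moment of Y
  have hEY2 : ∫ ω, (Y ^ 2) ω ∂(muP V p)
      = ∑ C ∈ 𝒞, ∑ D ∈ 𝒞, (p ^ C.card)⁻¹ * (p ^ D.card)⁻¹ * p ^ (C ∪ D).card := by
    have hsq : ∀ ω : V → Bool, (Y ^ 2) ω = ∑ C ∈ 𝒞, ∑ D ∈ 𝒞,
        (p ^ C.card)⁻¹ * (p ^ D.card)⁻¹ * ∏ v ∈ C ∪ D, (if ω v then (1 : ℝ) else 0) := by
      intro ω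
      have : (Y ^ 2) ω = Y ω * Y ω := by simp [sq]
      rw [this, hYdef, Finset.sum_mul_sum]
      refine Finset.sum_congr rfl fun C _ => Finset.sum_congr rfl fun D _ => ?_
      rw [← hprodU C D ω]; ring
    calc ∫ ω, (Y ^ 2) ω ∂(muP V p)
        = ∫ ω, (∑ C ∈ 𝒞, ∑ D ∈ 𝒞,
            (p ^ C.card)⁻¹ * (p ^ D.card)⁻¹ * ∏ v ∈ C ∪ D,
              (if ω v then (1 : ℝ) else 0)) ∂(muP V p) := by simp_rw [hsq]
      _ = _ := by
          rw [integral_finset_sum 𝒞 (fun C _ => hint _)]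
          refine Finset.sum_congr rfl fun C _ => ?_
          rw [integral_finset_sum 𝒞 (fun D _ => hint _)]
          refine Finset.sum_congr rfl fun D _ => ?_
          simp_rw [mul_assoc, integral_const_mul, hI]
  -- disjointness of distinct components
  have hdisj : ∀ C ∈ 𝒞, ∀ D ∈ 𝒞, C ≠ D → Disjoint C D := by
    intro C hC D hD hne
    obtain ⟨⟨c, hc⟩, -⟩ := (h𝒞 C).1 hC
    obtain ⟨⟨d, hd⟩, -⟩ := (h𝒞 D).1 hD
    have hcd : c ≠ d := by
      rintro rfl
      exact hne (Finset.coe_injective (hc.trans hd.symm))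
    rw [← Finset.disjoint_coe, hc, hd]
    exact G.pairwise_disjoint_supp_connectedComponent hcd
  -- bound on inverse powers of p
  have hboundC : ∀ C ∈ 𝒞, ((p ^ C.card)⁻¹ : ℝ) ≤ x := by
    intro C hC
    obtain ⟨-, hCcard⟩ := (h𝒞 C).1 hC
    have h1 : ((p ^ C.card)⁻¹ : ℝ) = (x ^ ε) ^ (C.card : ℝ) := by
      rw [← inv_pow, hpinv, Real.rpow_natCast]
    rw [h1]
    calc (x ^ ε) ^ (C.card : ℝ) ≤ (x ^ ε) ^ (1 / ε) :=
          Real.rpow_le_rpow_of_exponent_le (Real.one_le_rpow hx1 hε0.le) hCcard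
      _ = x := by
          rw [← Real.rpow_mul hx0.le, mul_one_div_cancel hε0.ne', Real.rpow_one]
  -- number of components at most n
  have hcardn : (𝒞.card : ℝ) ≤ n := by
    have hne : ∀ C ∈ 𝒞, C.Nonempty := by
      intro C hC
      obtain ⟨⟨c, hc⟩, -⟩ := (h𝒞 C).1 hC
      obtain ⟨v, hv⟩ := c.exists_rep
      have : v ∈ (C : Set V) := by
        rw [hc, SimpleGraph.ConnectedComponent.mem_supp_iff]; exact hv
      exact ⟨v, this⟩
    have h1 : 𝒞.card ≤ (𝒞.biUnion fun C => C).card := by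
      rw [Finset.card_biUnion (fun C hC D hD h => hdisj C hC D hD h)]
      calc 𝒞.card = ∑ C ∈ 𝒞, 1 := by simp
        _ ≤ ∑ C ∈ 𝒞, C.card :=
            Finset.sum_le_sum fun C hC => Finset.card_pos.2 (hne C hC)
    have h2 : (𝒞.biUnion fun C => C).card ≤ Fintype.card V := Finset.card_le_univ _
    have := h1.trans h2
    rw [hn]
    exact_mod_cast this
  -- variance bound
  have hVar : ProbabilityTheory.variance Y (muP V p) ≤ (n : ℝ) * x := by
    rw [ProbabilityTheory.variance_eq_sub hY2, hEY, hEY2]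
    have hsq1 : ((𝒞.card : ℝ)) ^ 2 = ∑ C ∈ 𝒞, ∑ D ∈ 𝒞, (1 : ℝ) := by
      simp [sq]
    rw [hsq1, ← Finset.sum_sub_distrib]
    simp_rw [← Finset.sum_sub_distrib]
    have hterm : ∀ C ∈ 𝒞, (∑ D ∈ 𝒞,
        ((p ^ C.card)⁻¹ * (p ^ D.card)⁻¹ * p ^ (C ∪ D).card - 1)) ≤ x := by
      intro C hC
      have hdiag : ∑ D ∈ 𝒞,
          ((p ^ C.card)⁻¹ * (p ^ D.card)⁻¹ * p ^ (C ∪ D).card - 1)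
          = (p ^ C.card)⁻¹ * (p ^ C.card)⁻¹ * p ^ (C ∪ C).card - 1 := by
        refine Finset.sum_eq_single_of_mem C hC fun D hD hne => ?_
        have hd := hdisj C hC D hD (fun h => hne h.symm)
        rw [Finset.card_union_of_disjoint hd, pow_add]
        field_simp
        exact sub_self 1
      rw [hdiag, Finset.union_self]
      have : (p ^ C.card)⁻¹ * (p ^ C.card)⁻¹ * p ^ C.card = (p ^ C.card)⁻¹ := by
        field_simp
      rw [this]
      have := hboundC C hC
      linarith
    calc (∑ C ∈ 𝒞, ∑ D ∈ 𝒞,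
          ((p ^ C.card)⁻¹ * (p ^ D.card)⁻¹ * p ^ (C ∪ D).card - 1))
        ≤ ∑ C ∈ 𝒞, x := Finset.sum_le_sum hterm
      _ = 𝒞.card * x := by rw [Finset.sum_const, nsmul_eq_mul]
      _ ≤ n * x := by
          apply mul_le_mul_of_nonneg_right hcardn hx0.le
  -- Chebyshev
  have hc : (0:ℝ) < ε ^ t * n := mul_pos (pow_pos hε0 t) hn0
  have key : (muP V p) {ω : V → Bool | ε ^ t * n ≤ |Y ω - (𝒞.card : ℝ)|}
      ≤ ENNReal.ofReal (ProbabilityTheory.variance Y (muP V p) / (ε ^ t * n) ^ 2) := by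
    have h := ProbabilityTheory.meas_ge_le_variance_div_sq (X := Y) hY2 hc
    rwa [hEY] at h
  have hgoal : (muP V p {ω : V → Bool |
        ε ^ t * n ≤ |(∑ C ∈ 𝒞, (p ^ C.card)⁻¹ * ∏ v ∈ C, (if ω v then (1 : ℝ) else 0))
          - (𝒞.card : ℝ)|}) = (muP V p) {ω : V → Bool | ε ^ t * n ≤ |Y ω - (𝒞.card : ℝ)|} := rfl
  rw [hgoal]
  have hVnonneg : 0 ≤ ProbabilityTheory.variance Y (muP V p) / (ε ^ t * n) ^ 2 :=
    div_nonneg (ProbabilityTheory.variance_nonneg _ _) (by positivity)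
  refine le_trans (le_trans (ENNReal.toReal_mono ENNReal.ofReal_ne_top key)
    (le_of_eq (ENNReal.toReal_ofReal hVnonneg))) ?_
  rw [div_le_iff₀ (by positivity : (0:ℝ) < (ε ^ t * n) ^ 2)]
  have hc2 : (ε ^ t * n) ^ 2 = ε ^ (2 * t) * (n : ℝ) ^ 2 := by
    rw [mul_pow, ← pow_mul, mul_comm t 2]
  have hxval : (n : ℝ) * x = 1 / 16 * (ε ^ (2 * t) * (n : ℝ) ^ 2) := by
    rw [hxdef]; ring
  rw [hc2]
  calc ProbabilityTheory.variance Y (muP V p) ≤ (n : ℝ) * x := hVar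
    _ = 1 / 16 * (ε ^ (2 * t) * (n : ℝ) ^ 2) := hxval
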